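/- arXiv:1711.07293 — 4 statements merged into one kernel-verified Lean document; each statement's English description precedes it below -/
import Mathlib

section
/- Let A be a unital C*-algebra carrying a faithful tracial state τ, and let Δ : A → A be a map such that for every pair x, y ∈ A there exists an element m ∈ A with Δ(x) = mx − xm and Δ(y) = my − ym. Then Δ is additive: Δ(u + v) = Δ(u) + Δ(v) for all u, v ∈ A. -/
open scoped ComplexOrder

private lemma trace_comm_zero {A : Type*} [NormedRing A] [StarRing A] [CStarRing A]
    [NormedAlgebra ℂ A] [CompleteSpace A] [StarModule ℂ A]
    (τ : A →L[ℂ] ℂ) (hτtr : ∀ a b : A, τ (a * b) = τ (b * a))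
    (p z x : A) (hp : p * z = z * p) : τ (p * (x * z - z * x)) = 0 := by
  have h1 : τ (p * (z * x)) = τ (p * (x * z)) := by
    calc τ (p * (z * x)) = τ ((p * z) * x) := by rw [mul_assoc]
      _ = τ ((z * p) * x) := by rw [hp]
      _ = τ (z * (p * x)) := by rw [mul_assoc]
      _ = τ ((p * x) * z) := hτtr z (p * x)
      _ = τ (p * (x * z)) := by rw [mul_assoc]
  rw [mul_sub, map_sub, h1, sub_self]

private lemma trace_comm_mul {A : Type*} [NormedRing A] [StarRing A] [CStarRing A]
    [NormedAlgebra ℂ A] [CompleteSpace A] [StarModule ℂ A]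
    (τ : A →L[ℂ] ℂ) (hτtr : ∀ a b : A, τ (a * b) = τ (b * a))
    (m x z : A) : τ ((m * x - x * m) * z) = τ (m * (x * z - z * x)) := by
  have h : τ ((x * m) * z) = τ (m * (z * x)) := by
    rw [mul_assoc, hτtr x (m * z), mul_assoc]
  rw [sub_mul, map_sub, mul_assoc, h, mul_sub, map_sub]

/-- Let `A` be a unital C*-algebra carrying a faithful tracial state
`τ`, and let `Δ : A → A` be a map such that for every pair `x, y ∈ A` there is
`m ∈ A` with `Δ x = m * x - x * m` and `Δ y = m * y - y * m`. Then `Δ` is additive. -/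
theorem additive_of_pointwise_inner_faithful_trace
    {A : Type*} [NormedRing A] [StarRing A] [CStarRing A] [NormedAlgebra ℂ A]
    [CompleteSpace A] [StarModule ℂ A]
    (τ : A →L[ℂ] ℂ)
    (hτ1 : τ 1 = 1)
    (hτpos : ∀ a : A, 0 ≤ τ (star a * a))
    (hτtr : ∀ a b : A, τ (a * b) = τ (b * a))
    (hτfaith : ∀ a : A, τ (star a * a) = 0 → a = 0)
    (Δ : A → A)
    (hΔ : ∀ x y : A, ∃ m : A, Δ x = m * x - x * m ∧ Δ y = m * y - y * m) :
    ∀ u v : A, Δ (u + v) = Δ u + Δ v := by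
  intro u v
  set d : A := Δ (u + v) - (Δ u + Δ v) with hd
  set z : A := star d with hz
  obtain ⟨n, hn, hnz⟩ := hΔ (u + v) z
  obtain ⟨n1, hn1, hn1z⟩ := hΔ u z
  obtain ⟨n2, hn2, hn2z⟩ := hΔ v z
  have c1 : (n - n1) * z = z * (n - n1) := by
    have h : n * z - z * n = n1 * z - z * n1 := by rw [← hnz, ← hn1z]
    have h2 : (n - n1) * z - z * (n - n1) = (n * z - z * n) - (n1 * z - z * n1) := by
      noncomm_ring
    rw [h] at h2
    rw [sub_self] at h2
    exact sub_eq_zero.mp h2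
  have c2 : (n - n2) * z = z * (n - n2) := by
    have h : n * z - z * n = n2 * z - z * n2 := by rw [← hnz, ← hn2z]
    have h2 : (n - n2) * z - z * (n - n2) = (n * z - z * n) - (n2 * z - z * n2) := by
      noncomm_ring
    rw [h] at h2
    rw [sub_self] at h2
    exact sub_eq_zero.mp h2
  have hdz : d * z = (n * (u + v) - (u + v) * n) * z
      - (n1 * u - u * n1) * z - (n2 * v - v * n2) * z := by
    rw [hd, hn, hn1, hn2]; noncomm_ring
  have e1 : τ (d * z) = τ ((n - n1) * (u * z - z * u)) + τ ((n - n2) * (v * z - z * v)) := by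
    rw [hdz, map_sub, map_sub, trace_comm_mul τ hτtr n (u + v) z,
      trace_comm_mul τ hτtr n1 u z, trace_comm_mul τ hτtr n2 v z,
      ← map_add, ← map_sub, ← map_sub]
    congr 1
    noncomm_ring
  have e2 : τ (d * z) = 0 := by
    rw [e1, trace_comm_zero τ hτtr _ _ _ c1, trace_comm_zero τ hτtr _ _ _ c2, add_zero]
  have key : τ (star d * d) = 0 := by
    rw [hτtr (star d) d, ← hz, e2]
  have hd0 : d = 0 := hτfaith d key
  rw [hd] at hd0
  exact sub_eq_zero.mp hd0
end

section
/- Let A be a unital C*-algebra carrying a faithful tracial state τ, and let Δ : A → A be a 2-local derivation such that for every pair x, y ∈ A the witnessing derivation can be chosen inner, i.e. there exists m ∈ A with Δ(x) = mx − xm and Δ(y) = my − ym. Then Δ is a derivation: it is ℂ-linear and satisfies Δ(ab) = aΔ(b) + Δ(a)b for all a, b ∈ A. -/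
open scoped ComplexOrder

section TwoLocalAux

set_option linter.unusedSectionVars false

variable {A : Type*} [NormedRing A] [StarRing A] [CStarRing A] [NormedAlgebra ℂ A]
    [CompleteSpace A] [StarModule ℂ A]

/-- If `τ (z * w) = 0` for all `w`, then `z = 0`. -/
theorem TwoLocal.faithful' (τ : A →L[ℂ] ℂ)
    (hτtr : ∀ a b : A, τ (a * b) = τ (b * a))
    (hτfaith : ∀ a : A, τ (star a * a) = 0 → a = 0)
    (z : A) (hz : ∀ w : A, τ (z * w) = 0) : z = 0 :=
  hτfaith z ((hτtr (star z) z).trans (hz (star z)))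

/-- Trace of a product of two "positive" elements is nonnegative. -/
theorem TwoLocal.pos2 (τ : A →L[ℂ] ℂ)
    (hτpos : ∀ a : A, 0 ≤ τ (star a * a))
    (hτtr : ∀ a b : A, τ (a * b) = τ (b * a))
    (p q : A) : 0 ≤ τ ((star p * p) * (star q * q)) := by
  have e1 : (star p * p) * (star q * q) = (star p * (p * star q)) * q := by noncomm_ring
  rw [e1, hτtr]
  have e2 : q * (star p * (p * star q)) = star (p * star q) * (p * star q) := by
    simp only [star_mul, star_star]; noncomm_ring
  rw [e2]
  exact hτpos _

/-- Elementwise semiprimeness from a faithful trace. -/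
theorem TwoLocal.semiP (τ : A →L[ℂ] ℂ)
    (hτtr : ∀ a b : A, τ (a * b) = τ (b * a))
    (hτfaith : ∀ a : A, τ (star a * a) = 0 → a = 0)
    (s : A) (h : ∀ z : A, s * z * s = 0) : s = 0 := by
  have h2 : s * star s = 0 := by
    apply hτfaith
    have e : star (s * star s) * (s * star s) = (s * star s * s) * star s := by
      simp only [star_mul, star_star]; noncomm_ring
    rw [e, h (star s), zero_mul, map_zero]
  apply hτfaith
  rw [hτtr, h2, map_zero]

/-- Brešar-type lemma: if `a*w*b + b*w*a = 0` for all `w`, then `a*w*b = 0` for all `w`. -/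
theorem TwoLocal.lemD (τ : A →L[ℂ] ℂ)
    (hτpos : ∀ a : A, 0 ≤ τ (star a * a))
    (hτtr : ∀ a b : A, τ (a * b) = τ (b * a))
    (hτfaith : ∀ a : A, τ (star a * a) = 0 → a = 0)
    (a b : A) (h : ∀ w : A, a * w * b + b * w * a = 0) :
    ∀ w : A, a * w * b = 0 := by
  have h1 := h (star a)
  have e1 : b * star a * a = -(a * star a * b) := eq_neg_of_add_eq_zero_right h1
  have hZ1 : 0 ≤ τ ((a * star a) * (b * (star a * a) * star b)) := by
    have e : (a * star a) * (b * (star a * a) * star b)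
        = (star (star a) * star a) * (star (a * star b) * (a * star b)) := by
      simp only [star_star, star_mul]; noncomm_ring
    rw [e]
    exact TwoLocal.pos2 τ hτpos hτtr _ _
  have hZ2 : τ ((a * star a) * (b * (star a * a) * star b))
      = - τ (star (a * star a * b) * (a * star a * b)) := by
    have e0 : (a * star a) * (b * (star a * a) * star b)
        = -(((a * star a) * (a * star a * b)) * star b) := by
      rw [show b * (star a * a) = b * star a * a from by noncomm_ring, e1]; noncomm_ring
    rw [e0, map_neg, hτtr ((a * star a) * (a * star a * b)) (star b)]
    have e5 : star b * ((a * star a) * (a * star a * b))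
        = star (a * star a * b) * (a * star a * b) := by
      simp only [star_mul, star_star]; noncomm_ring
    rw [e5]
  have hc : a * star a * b = 0 := by
    apply hτfaith
    have h4 : 0 ≤ - τ (star (a * star a * b) * (a * star a * b)) := hZ2 ▸ hZ1
    exact le_antisymm (neg_nonneg.mp h4) (hτpos _)
  have hbv : b * star a * a = 0 := by rw [e1, hc, neg_zero]
  have hab : star a * b = 0 := by
    apply hτfaith
    have e : star (star a * b) * (star a * b) = star b * (a * star a * b) := by
      simp only [star_mul, star_star]; noncomm_ring
    rw [e, hc, mul_zero, map_zero]
  have hab2 : a * star b = 0 := by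
    apply hτfaith
    have e : star (a * star b) * (a * star b) = (b * star a * a) * star b := by
      simp only [star_mul, star_star]; noncomm_ring
    rw [e, hbv, zero_mul, map_zero]
  have hmid : ∀ z : A, (star a * a) * z * (b * star b) = 0 := by
    intro z
    linear_combination (norm := noncomm_ring) (star a) * (h z) * (star b) - hab * (z * (a * star b))
  intro w
  apply hτfaith
  have e1' : star (a*w*b) * (a*w*b) = star b * (star w * ((star a * a) * w * b)) := by
    simp only [star_mul]; noncomm_ring
  rw [e1', hτtr (star b) (star w * ((star a * a) * w * b))]
  have e2' : (star w * ((star a * a) * w * b)) * star b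
      = star w * ((star a * a) * w * (b * star b)) := by noncomm_ring
  rw [e2', hmid w, mul_zero, map_zero]

end TwoLocalAux

set_option maxHeartbeats 4000000 in
/-- Let `A` be a unital C*-algebra carrying a faithful tracial state
`τ`, and let `Δ : A → A` be a 2-local derivation whose witnessing derivations can
be chosen inner: for every pair `x, y ∈ A` there is `m ∈ A` with
`Δ x = m * x - x * m` and `Δ y = m * y - y * m`. Then `Δ` is a derivation: it is
ℂ-linear and satisfies `Δ (a * b) = a * Δ b + Δ a * b`. -/
theorem twoLocal_inner_is_derivation_of_faithful_trace
    {A : Type*} [NormedRing A] [StarRing A] [CStarRing A] [NormedAlgebra ℂ A]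
    [CompleteSpace A] [StarModule ℂ A]
    (τ : A →L[ℂ] ℂ)
    (hτ1 : τ 1 = 1)
    (hτpos : ∀ a : A, 0 ≤ τ (star a * a))
    (hτtr : ∀ a b : A, τ (a * b) = τ (b * a))
    (hτfaith : ∀ a : A, τ (star a * a) = 0 → a = 0)
    (Δ : A → A)
    (hΔ : ∀ x y : A, ∃ m : A, Δ x = m * x - x * m ∧ Δ y = m * y - y * m) :
    (∀ u v : A, Δ (u + v) = Δ u + Δ v) ∧
    (∀ (c : ℂ) (x : A), Δ (c • x) = c • Δ x) ∧
    (∀ a b : A, Δ (a * b) = a * Δ b + Δ a * b) := by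
  -- homogeneity
  have hsmul : ∀ (c : ℂ) (x : A), Δ (c • x) = c • Δ x := by
    intro c x
    obtain ⟨m, h1, h2⟩ := hΔ (c • x) x
    rw [h1, h2, mul_smul_comm, smul_mul_assoc, ← smul_sub]
  -- the "star identity" τ(Δx · y) = -τ(x · Δy)
  have hstar : ∀ x y : A, τ (Δ x * y) = - τ (x * Δ y) := by
    intro x y
    obtain ⟨m, h1, h2⟩ := hΔ x y
    rw [h1, h2]
    have e1 : (m*x - x*m)*y = m*(x*y) - x*(m*y) := by noncomm_ring
    have e2 : x*(m*y - y*m) = x*(m*y) - (x*y)*m := by noncomm_ring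
    rw [e1, e2, map_sub, map_sub, hτtr m (x*y)]
    ring
  -- additivity
  have hadd : ∀ u v : A, Δ (u + v) = Δ u + Δ v := by
    intro u v
    have key : ∀ w : A, τ ((Δ (u+v) - Δ u - Δ v) * w) = 0 := by
      intro w
      have e : (Δ (u+v) - Δ u - Δ v) * w = Δ (u+v) * w - Δ u * w - Δ v * w := by noncomm_ring
      rw [e, map_sub, map_sub, hstar (u+v) w, hstar u w, hstar v w]
      have e2 : (u + v) * Δ w = u * Δ w + v * Δ w := by noncomm_ring
      rw [e2, map_add]
      ring
    have h0 := TwoLocal.faithful' τ hτtr hτfaith _ key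
    rw [sub_sub, sub_eq_zero] at h0
    exact h0
  have hneg : ∀ v : A, Δ (-v) = - Δ v := by
    intro v
    have h := hsmul (-1) v
    rwa [neg_one_smul, neg_one_smul] at h
  have hsub : ∀ u v : A, Δ (u - v) = Δ u - Δ v := by
    intro u v
    rw [sub_eq_add_neg, hadd, hneg, ← sub_eq_add_neg]
  -- square rule
  have hsq : ∀ x : A, Δ (x * x) = x * Δ x + Δ x * x := by
    intro x
    obtain ⟨m, h1, h2⟩ := hΔ x (x*x)
    rw [h1, h2]
    noncomm_ring
  -- Jordan rule
  have hJ : ∀ x y : A, Δ (x*y + y*x) = Δ x * y + x * Δ y + Δ y * x + y * Δ x := by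
    intro x y
    have h1 := hsq (x + y)
    have e : (x+y)*(x+y) = x*x + (x*y + y*x) + y*y := by noncomm_ring
    rw [e, hadd (x*x + (x*y + y*x)) (y*y), hadd (x*x) (x*y + y*x), hadd x y, hsq x, hsq y] at h1
    have h2 := eq_sub_of_add_eq' (eq_sub_of_add_eq h1)
    rw [h2]
    noncomm_ring
  have hyx : ∀ x y : A, Δ (y*x) = Δ x * y + x * Δ y + Δ y * x + y * Δ x - Δ (x*y) := by
    intro x y
    have h := hJ x y
    rw [hadd (x*y) (y*x)] at h
    exact eq_sub_of_add_eq' h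
  -- Jordan triple rule
  have hJ2 : ∀ x y : A, Δ (x*y*x) = Δ x * y * x + x * Δ y * x + x * y * Δ x := by
    intro x y
    have h1 := hJ x (x*y + y*x)
    have e : x*(x*y + y*x) + (x*y + y*x)*x = x*x*y + y*(x*x) + (x*y*x + x*y*x) := by noncomm_ring
    rw [e, hadd (x*x*y + y*(x*x)) (x*y*x + x*y*x), hadd (x*y*x) (x*y*x), hJ x y] at h1
    have h2 := hJ (x*x) y
    rw [hsq x] at h2
    rw [h2] at h1
    have h3 := eq_sub_of_add_eq' h1
    have h4 : (2:ℂ) • Δ (x*y*x) = (2:ℂ) • (Δ x * y * x + x * Δ y * x + x * y * Δ x) := by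
      rw [two_smul, two_smul, h3]
      noncomm_ring
    calc Δ (x*y*x) = ((2:ℂ)⁻¹ * 2) • Δ (x*y*x) := by
          rw [show ((2:ℂ)⁻¹*2) = 1 by norm_num, one_smul]
      _ = (2:ℂ)⁻¹ • ((2:ℂ) • Δ (x*y*x)) := mul_smul _ _ _
      _ = (2:ℂ)⁻¹ • ((2:ℂ) • (Δ x * y * x + x * Δ y * x + x * y * Δ x)) := by rw [h4]
      _ = ((2:ℂ)⁻¹ * 2) • (Δ x * y * x + x * Δ y * x + x * y * Δ x) := (mul_smul _ _ _).symm
      _ = Δ x * y * x + x * Δ y * x + x * y * Δ x := by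
          rw [show ((2:ℂ)⁻¹*2) = 1 by norm_num, one_smul]
  -- linearized triple rule
  have hJ3 : ∀ x y z : A, Δ (x*y*z + z*y*x)
      = Δ x*y*z + x*Δ y*z + x*y*Δ z + Δ z*y*x + z*Δ y*x + z*y*Δ x := by
    intro x y z
    have h1 := hJ2 (x+z) y
    rw [hadd x z] at h1
    have e : (x+z)*y*(x+z) = x*y*x + (z*y*z + (x*y*z + z*y*x)) := by noncomm_ring
    rw [e, hadd (x*y*x) (z*y*z + (x*y*z + z*y*x)), hadd (z*y*z) (x*y*z + z*y*x),
      hJ2 x y, hJ2 z y] at h1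
    have h2 := eq_sub_of_add_eq' (eq_sub_of_add_eq' h1)
    rw [h2]
    noncomm_ring
  -- the key Brešar identity: G(x,y) w [x,y] + [x,y] w G(x,y) = 0
  have hKey : ∀ x y w : A,
      (Δ (x*y) - Δ x * y - x * Δ y) * w * (x*y - y*x)
      + (x*y - y*x) * w * (Δ (x*y) - Δ x * y - x * Δ y) = 0 := by
    intro x y w
    have h1 := hJ3 (x*y) w (y*x)
    have e : (x*y)*w*(y*x) + (y*x)*w*(x*y) = x*(y*w*y)*x + y*(x*w*x)*y := by noncomm_ring
    rw [e, hadd (x*(y*w*y)*x) (y*(x*w*x)*y), hJ2 x (y*w*y), hJ2 y (x*w*x), hJ2 y w, hJ2 x w,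
      hyx x y] at h1
    linear_combination (norm := noncomm_ring) h1
  have hk1 : ∀ x y w : A, (Δ (x*y) - Δ x * y - x * Δ y) * w * (x*y - y*x) = 0 := by
    intro x y
    exact TwoLocal.lemD τ hτpos hτtr hτfaith _ _ (hKey x y)
  have hk1' : ∀ x y w : A, (x*y - y*x) * w * (Δ (x*y) - Δ x * y - x * Δ y) = 0 := by
    intro x y w
    have h := hKey x y w
    rw [hk1 x y w, zero_add] at h
    exact h
  -- first polarization
  have hpol1 : ∀ x y u w : A, (Δ (x*y) - Δ x * y - x * Δ y) * w * (u*y - y*u) = 0 := by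
    intro x y u w
    apply TwoLocal.semiP τ hτtr hτfaith
    intro z
    have hrel : (Δ (x*y) - Δ x * y - x * Δ y) * w * (u*y - y*u)
        + (Δ (u*y) - Δ u * y - u * Δ y) * w * (x*y - y*x) = 0 := by
      have h := hk1 (x+u) y w
      rw [add_mul x u y, hadd (x*y) (u*y), hadd x u] at h
      linear_combination (norm := noncomm_ring) h - hk1 x y w - hk1 u y w
    linear_combination (norm := noncomm_ring)
      ((Δ (x*y) - Δ x * y - x * Δ y) * w * (u*y - y*u) * z) * hrel
      - ((Δ (x*y) - Δ x * y - x * Δ y) * w) * (hk1' u y z) * (w * (x*y - y*x))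
  have hpol1' : ∀ x y u w : A, (u*y - y*u) * w * (Δ (x*y) - Δ x * y - x * Δ y) = 0 := by
    intro x y u w
    apply TwoLocal.semiP τ hτtr hτfaith
    intro z
    have hrel : (u*y - y*u) * w * (Δ (x*y) - Δ x * y - x * Δ y)
        + (x*y - y*x) * w * (Δ (u*y) - Δ u * y - u * Δ y) = 0 := by
      have h := hk1' (x+u) y w
      rw [add_mul x u y, hadd (x*y) (u*y), hadd x u] at h
      linear_combination (norm := noncomm_ring) h - hk1' x y w - hk1' u y w
    linear_combination (norm := noncomm_ring)
      ((u*y - y*u) * w * (Δ (x*y) - Δ x * y - x * Δ y) * z) * hrel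
      - ((u*y - y*u) * w) * (hk1 x y z) * (w * (Δ (u*y) - Δ u * y - u * Δ y))
  -- second polarization
  have hpol2 : ∀ x y u v w : A, (Δ (x*y) - Δ x * y - x * Δ y) * w * (u*v - v*u) = 0 := by
    intro x y u v w
    apply TwoLocal.semiP τ hτtr hτfaith
    intro z
    have hrel : (Δ (x*y) - Δ x * y - x * Δ y) * w * (u*v - v*u)
        + (Δ (x*v) - Δ x * v - x * Δ v) * w * (u*y - y*u) = 0 := by
      have h := hpol1 x (y+v) u w
      rw [mul_add x y v, hadd (x*y) (x*v), hadd y v, mul_add u y v, add_mul y v u] at h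
      linear_combination (norm := noncomm_ring) h - hpol1 x y u w - hpol1 x v u w
    linear_combination (norm := noncomm_ring)
      hrel * (z * ((Δ (x*y) - Δ x * y - x * Δ y) * w * (u*v - v*u)))
      - ((Δ (x*v) - Δ x * v - x * Δ v) * w) * (hpol1' x y u z) * (w * (u*v - v*u))
  have hGcomm : ∀ x y u v : A, (Δ (x*y) - Δ x * y - x * Δ y) * (u*v - v*u) = 0 := by
    intro x y u v
    have h := hpol2 x y u v 1
    rwa [mul_one] at h
  -- G(x,y) is zero
  have hGzero : ∀ x y : A, Δ (x*y) - Δ x * y - x * Δ y = 0 := by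
    intro x y
    obtain ⟨m, hm, -⟩ := hΔ (x*y - y*x) (x*y - y*x)
    -- G + G is an explicit combination of commutators
    have h2G : (Δ (x*y) - Δ x * y - x * Δ y) + (Δ (x*y) - Δ x * y - x * Δ y)
        = (m*(x*y - y*x) - (x*y - y*x)*m) - (Δ x * y - y * Δ x) - (x * Δ y - Δ y * x) := by
      rw [← hm, hsub (x*y) (y*x), hyx x y]
      noncomm_ring
    have hgg : (Δ (x*y) - Δ x * y - x * Δ y) * (Δ (x*y) - Δ x * y - x * Δ y) = 0 := by
      have h4 : (Δ (x*y) - Δ x * y - x * Δ y)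
          * ((Δ (x*y) - Δ x * y - x * Δ y) + (Δ (x*y) - Δ x * y - x * Δ y)) = 0 := by
        rw [h2G]
        linear_combination (norm := noncomm_ring) hGcomm x y m (x*y - y*x)
          - hGcomm x y (Δ x) y - hGcomm x y x (Δ y)
      have h5 : (2:ℂ) • ((Δ (x*y) - Δ x * y - x * Δ y) * (Δ (x*y) - Δ x * y - x * Δ y)) = 0 := by
        rw [two_smul]
        linear_combination (norm := noncomm_ring) h4
      calc (Δ (x*y) - Δ x * y - x * Δ y) * (Δ (x*y) - Δ x * y - x * Δ y)
          = ((2:ℂ)⁻¹ * 2) • ((Δ (x*y) - Δ x * y - x * Δ y) * (Δ (x*y) - Δ x * y - x * Δ y)) := by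
            rw [show ((2:ℂ)⁻¹*2) = 1 by norm_num, one_smul]
        _ = (2:ℂ)⁻¹ • ((2:ℂ) • ((Δ (x*y) - Δ x * y - x * Δ y) * (Δ (x*y) - Δ x * y - x * Δ y))) :=
            mul_smul _ _ _
        _ = 0 := by rw [h5, smul_zero]
    -- normality of G
    have hGn : star (Δ (x*y) - Δ x * y - x * Δ y) * (Δ (x*y) - Δ x * y - x * Δ y)
        = (Δ (x*y) - Δ x * y - x * Δ y) * star (Δ (x*y) - Δ x * y - x * Δ y) := by
      rw [← sub_eq_zero]
      apply TwoLocal.faithful' τ hτtr hτfaith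
      intro w
      have h := hGcomm x y w (star (Δ (x*y) - Δ x * y - x * Δ y))
      have h2 : (Δ (x*y) - Δ x * y - x * Δ y) * (w * star (Δ (x*y) - Δ x * y - x * Δ y))
          = (Δ (x*y) - Δ x * y - x * Δ y) * (star (Δ (x*y) - Δ x * y - x * Δ y) * w) := by
        linear_combination (norm := noncomm_ring) h
      have e1 : (star (Δ (x*y) - Δ x * y - x * Δ y) * (Δ (x*y) - Δ x * y - x * Δ y)
            - (Δ (x*y) - Δ x * y - x * Δ y) * star (Δ (x*y) - Δ x * y - x * Δ y)) * w
          = star (Δ (x*y) - Δ x * y - x * Δ y) * ((Δ (x*y) - Δ x * y - x * Δ y) * w)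
            - (Δ (x*y) - Δ x * y - x * Δ y) * (star (Δ (x*y) - Δ x * y - x * Δ y) * w) := by
        noncomm_ring
      rw [e1, map_sub,
        ← hτtr ((Δ (x*y) - Δ x * y - x * Δ y) * w) (star (Δ (x*y) - Δ x * y - x * Δ y)),
        ← h2, mul_assoc]
      exact sub_self _
    -- conclude G = 0
    have hp2 : (star (Δ (x*y) - Δ x * y - x * Δ y) * (Δ (x*y) - Δ x * y - x * Δ y))
        * (star (Δ (x*y) - Δ x * y - x * Δ y) * (Δ (x*y) - Δ x * y - x * Δ y)) = 0 := by
      have e : (star (Δ (x*y) - Δ x * y - x * Δ y) * (Δ (x*y) - Δ x * y - x * Δ y))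
          * (star (Δ (x*y) - Δ x * y - x * Δ y) * (Δ (x*y) - Δ x * y - x * Δ y))
          = star (Δ (x*y) - Δ x * y - x * Δ y)
            * ((Δ (x*y) - Δ x * y - x * Δ y) * star (Δ (x*y) - Δ x * y - x * Δ y))
            * (Δ (x*y) - Δ x * y - x * Δ y) := by noncomm_ring
      rw [e, ← hGn]
      have e2 : star (Δ (x*y) - Δ x * y - x * Δ y)
            * (star (Δ (x*y) - Δ x * y - x * Δ y) * (Δ (x*y) - Δ x * y - x * Δ y))
            * (Δ (x*y) - Δ x * y - x * Δ y)
          = (star (Δ (x*y) - Δ x * y - x * Δ y) * star (Δ (x*y) - Δ x * y - x * Δ y))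
            * ((Δ (x*y) - Δ x * y - x * Δ y) * (Δ (x*y) - Δ x * y - x * Δ y)) := by noncomm_ring
      rw [e2, hgg, mul_zero]
    have hpzero : star (Δ (x*y) - Δ x * y - x * Δ y) * (Δ (x*y) - Δ x * y - x * Δ y) = 0 := by
      apply hτfaith
      have hsa : star (star (Δ (x*y) - Δ x * y - x * Δ y) * (Δ (x*y) - Δ x * y - x * Δ y))
          = star (Δ (x*y) - Δ x * y - x * Δ y) * (Δ (x*y) - Δ x * y - x * Δ y) := by
        rw [star_mul, star_star]
      rw [hsa, hp2, map_zero]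
    exact hτfaith _ (by rw [hpzero, map_zero])
  refine ⟨hadd, hsmul, ?_⟩
  intro a b
  have h := hGzero a b
  rw [sub_sub, sub_eq_zero] at h
  rw [h]
  exact add_comm _ _
end

section
/- Let A be a unital C*-algebra carrying a faithful tracial state τ, and let Δ : A → A be a map such that for every pair x, y ∈ A there exists a sequence (mₙ) of elements of A with Δ(x) = limₙ (mₙx − xmₙ) and Δ(y) = limₙ (mₙy − ymₙ) in norm. Then Δ is additive: Δ(u + v) = Δ(u) + Δ(v) for all u, v ∈ A. -/
open scoped ComplexOrder

open Filter Topology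

/-- Let `A` be a unital C*-algebra carrying a faithful tracial state
`τ`, and let `Δ : A → A` be a map such that for every pair `x, y ∈ A` there is a
sequence `(mₙ)` in `A` with `Δ x = limₙ (mₙ * x - x * mₙ)` and
`Δ y = limₙ (mₙ * y - y * mₙ)` in norm. Then `Δ` is additive. -/
theorem additive_of_pointwise_approx_inner_faithful_trace
    {A : Type*} [NormedRing A] [StarRing A] [CStarRing A] [NormedAlgebra ℂ A]
    [CompleteSpace A] [StarModule ℂ A]
    (τ : A →L[ℂ] ℂ)
    (hτ1 : τ 1 = 1)
    (hτpos : ∀ a : A, 0 ≤ τ (star a * a))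
    (hτtr : ∀ a b : A, τ (a * b) = τ (b * a))
    (hτfaith : ∀ a : A, τ (star a * a) = 0 → a = 0)
    (Δ : A → A)
    (hΔ : ∀ x y : A, ∃ m : ℕ → A,
      Tendsto (fun n => m n * x - x * m n) atTop (𝓝 (Δ x)) ∧
      Tendsto (fun n => m n * y - y * m n) atTop (𝓝 (Δ y))) :
    ∀ u v : A, Δ (u + v) = Δ u + Δ v := by
  -- Key identity: τ(Δx · y + x · Δy) = 0 for all x, y, since the trace kills commutators.
  have key : ∀ x y : A, τ (Δ x * y) + τ (x * Δ y) = 0 := by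
    intro x y
    obtain ⟨m, h1, h2⟩ := hΔ x y
    have hconv : Tendsto
        (fun n => (m n * x - x * m n) * y + x * (m n * y - y * m n)) atTop
        (𝓝 (Δ x * y + x * Δ y)) :=
      (h1.mul_const y).add (h2.const_mul x)
    have hzero : ∀ n, τ ((m n * x - x * m n) * y + x * (m n * y - y * m n)) = 0 := by
      intro n
      have hrw : (m n * x - x * m n) * y + x * (m n * y - y * m n)
          = m n * (x * y) - (x * y) * m n := by noncomm_ring
      rw [hrw, map_sub, hτtr, sub_self]
    have hτconv : Tendsto
        (fun n => τ ((m n * x - x * m n) * y + x * (m n * y - y * m n))) atTop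
        (𝓝 (τ (Δ x * y + x * Δ y))) :=
      (τ.continuous.tendsto _).comp hconv
    have : τ (Δ x * y + x * Δ y) = 0 := by
      have hc : Tendsto
          (fun n => τ ((m n * x - x * m n) * y + x * (m n * y - y * m n))) atTop
          (𝓝 (0 : ℂ)) := by
        simpa [hzero] using (tendsto_const_nhds : Tendsto (fun _ : ℕ => (0 : ℂ)) atTop (𝓝 0))
      exact tendsto_nhds_unique hτconv hc
    rwa [map_add] at this
  intro u v
  set d := Δ (u + v) - Δ u - Δ v with hd
  have hdy : ∀ y : A, τ (d * y) = 0 := by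
    intro y
    have e1 := key (u + v) y
    have e2 := key u y
    have e3 := key v y
    have hsplit : τ (d * y) = τ (Δ (u + v) * y) - τ (Δ u * y) - τ (Δ v * y) := by
      rw [hd]; rw [sub_mul, sub_mul, map_sub, map_sub]
    have hadd : τ ((u + v) * Δ y) = τ (u * Δ y) + τ (v * Δ y) := by
      rw [add_mul, map_add]
    rw [hsplit]
    linear_combination e1 - e2 - e3 - hadd
  have hds := hdy (star d)
  have : star d = 0 := by
    apply hτfaith
    rwa [star_star]
  have hd0 : d = 0 := by
    simpa using congrArg star this
  rw [hd, sub_sub, sub_eq_zero] at hd0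
  exact hd0
end

section
/- Let A be a unital C*-algebra carrying a faithful tracial state τ, and let Δ : A → A be an approximately 2-local derivation such that for every pair x, y ∈ A the approximating derivations can be chosen inner, i.e. there exists a sequence (mₙ) of elements of A with Δ(x) = limₙ (mₙx − xmₙ) and Δ(y) = limₙ (mₙy − ymₙ) in norm. Then Δ is a derivation: it is ℂ-linear and satisfies Δ(ab) = aΔ(b) + Δ(a)b for all a, b ∈ A. -/
open scoped ComplexOrder

open Filter Topology
private lemma aux_faithR {A : Type*} [NormedRing A] [StarRing A] [NormedAlgebra ℂ A]
    (τ : A →L[ℂ] ℂ) (hτfaith : ∀ a : A, τ (star a * a) = 0 → a = 0)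
    (w : A) (h : τ (w * star w) = 0) : w = 0 := by
  have h2 : τ (star (star w) * star w) = 0 := by rwa [star_star]
  have h3 := hτfaith _ h2
  have h4 := congrArg star h3
  rwa [star_star, star_zero] at h4

private lemma aux_WyW {A : Type*} [NormedRing A] [StarRing A] [NormedAlgebra ℂ A]
    (τ : A →L[ℂ] ℂ) (hτfaith : ∀ a : A, τ (star a * a) = 0 → a = 0)
    (w : A) (h : w * star w * w = 0) : w = 0 := by
  have hp : (w * star w) * (w * star w) = 0 := by
    rw [show (w * star w) * (w * star w) = (w * star w * w) * star w by noncomm_ring, h, zero_mul]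
  have h0 : τ (star (w * star w) * (w * star w)) = 0 := by
    rw [star_mul, star_star, hp, map_zero]
  have hp0 := hτfaith _ h0
  exact aux_faithR τ hτfaith w (by rw [hp0, map_zero])

private lemma aux_key2 {A : Type*} [NormedRing A] [StarRing A] [NormedAlgebra ℂ A]
    (τ : A →L[ℂ] ℂ) (hτfaith : ∀ a : A, τ (star a * a) = 0 → a = 0)
    (g1 g2 c1 c2 : A) (hsum : ∀ x : A, g1 * x * c2 + g2 * x * c1 = 0)
    (hc : ∀ u : A, c2 * u * g2 = 0) (x : A) : g1 * x * c2 = 0 := by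
  have heq : g1 * x * c2 = -(g2 * x * c1) := add_eq_zero_iff_eq_neg.mp (hsum x)
  apply aux_WyW τ hτfaith
  calc g1 * x * c2 * star (g1 * x * c2) * (g1 * x * c2)
      = g1 * x * c2 * star (g1 * x * c2) * (-(g2 * x * c1)) := by rw [heq]
    _ = -(g1 * x * (c2 * star (g1 * x * c2) * g2) * x * c1) := by noncomm_ring
    _ = 0 := by rw [hc]; simp

/-- Let `A` be a unital C*-algebra carrying a faithful tracial state
`τ`, and let `Δ : A → A` be an approximately 2-local derivation whose approximating
derivations can be chosen inner: for every pair `x, y ∈ A` there is a sequence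
`(mₙ)` in `A` with `Δ x = limₙ (mₙ * x - x * mₙ)` and `Δ y = limₙ (mₙ * y - y * mₙ)`
in norm. Then `Δ` is a derivation: it is ℂ-linear and satisfies
`Δ (a * b) = a * Δ b + Δ a * b`. -/
theorem approxTwoLocal_inner_is_derivation_of_faithful_trace
    {A : Type*} [NormedRing A] [StarRing A] [CStarRing A] [NormedAlgebra ℂ A]
    [CompleteSpace A] [StarModule ℂ A]
    (τ : A →L[ℂ] ℂ)
    (hτ1 : τ 1 = 1)
    (hτpos : ∀ a : A, 0 ≤ τ (star a * a))
    (hτtr : ∀ a b : A, τ (a * b) = τ (b * a))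
    (hτfaith : ∀ a : A, τ (star a * a) = 0 → a = 0)
    (Δ : A → A)
    (hΔ : ∀ x y : A, ∃ m : ℕ → A,
      Tendsto (fun n => m n * x - x * m n) atTop (𝓝 (Δ x)) ∧
      Tendsto (fun n => m n * y - y * m n) atTop (𝓝 (Δ y))) :
    (∀ u v : A, Δ (u + v) = Δ u + Δ v) ∧
    (∀ (c : ℂ) (x : A), Δ (c • x) = c • Δ x) ∧
    (∀ a b : A, Δ (a * b) = a * Δ b + Δ a * b) := by
  -- the key trace identity
  have hK : ∀ x y : A, τ (Δ x * y) = -τ (x * Δ y) := by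
    intro x y
    obtain ⟨m, h1, h2⟩ := hΔ x y
    have h3 : Tendsto (fun n => τ ((m n * x - x * m n) * y + x * (m n * y - y * m n)))
        atTop (𝓝 (τ (Δ x * y + x * Δ y))) :=
      (τ.continuous.tendsto _).comp ((h1.mul tendsto_const_nhds).add (tendsto_const_nhds.mul h2))
    have h5 : ∀ n, τ ((m n * x - x * m n) * y + x * (m n * y - y * m n)) = 0 := by
      intro n
      have e : (m n * x - x * m n) * y + x * (m n * y - y * m n)
          = m n * (x*y) - (x*y) * m n := by noncomm_ring
      rw [e, map_sub, hτtr (m n) (x*y), sub_self]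
    have h7 : (fun n => τ ((m n * x - x * m n) * y + x * (m n * y - y * m n)))
        = fun _ => (0:ℂ) := funext h5
    rw [h7] at h3
    have h6 : τ (Δ x * y + x * Δ y) = 0 := tendsto_nhds_unique h3 tendsto_const_nhds
    rw [map_add] at h6
    linear_combination h6
  have lemF : ∀ u : A, (∀ z, τ (u * z) = 0) → u = 0 :=
    fun u h => aux_faithR τ hτfaith u (h (star u))
  -- additivity
  have hadd : ∀ u v : A, Δ (u + v) = Δ u + Δ v := by
    intro u v
    have h : ∀ z, τ ((Δ (u+v) - Δ u - Δ v) * z) = 0 := by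
      intro z
      rw [sub_mul, sub_mul, map_sub, map_sub, hK (u+v) z, hK u z, hK v z, add_mul, map_add]
      ring
    have h0 := lemF _ h
    rw [sub_sub] at h0
    exact sub_eq_zero.mp h0
  -- homogeneity
  have hsmul : ∀ (c : ℂ) (x : A), Δ (c • x) = c • Δ x := by
    intro c x
    have h : ∀ z, τ ((Δ (c • x) - c • Δ x) * z) = 0 := by
      intro z
      rw [sub_mul, map_sub, hK (c • x) z, smul_mul_assoc, map_smul, smul_mul_assoc,
        map_smul, hK x z]
      simp [smul_eq_mul]
    exact sub_eq_zero.mp (lemF _ h)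
  -- negation and subtraction
  have hsub : ∀ u v : A, Δ (u - v) = Δ u - Δ v := by
    intro u v
    have hneg : Δ (-v) = -Δ v := by
      rw [show -v = (-1:ℂ) • v by rw [neg_one_smul], hsmul, neg_one_smul]
    rw [sub_eq_add_neg, hadd, hneg, sub_eq_add_neg]
  -- Jordan property
  have hJordan : ∀ x : A, Δ (x * x) = Δ x * x + x * Δ x := by
    intro x
    obtain ⟨m, h1, h2⟩ := hΔ x (x*x)
    have h3 : Tendsto (fun n => (m n * x - x * m n) * x + x * (m n * x - x * m n))
        atTop (𝓝 (Δ x * x + x * Δ x)) :=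
      (h1.mul tendsto_const_nhds).add (tendsto_const_nhds.mul h1)
    have h4 : (fun n => m n * (x*x) - (x*x) * m n)
        = fun n => (m n * x - x * m n) * x + x * (m n * x - x * m n) := by
      funext n; noncomm_ring
    rw [h4] at h2
    exact tendsto_nhds_unique h2 h3
  -- linearized Jordan
  have hJ' : ∀ x y : A, Δ (x*y + y*x) = Δ x * y + x * Δ y + Δ y * x + y * Δ x := by
    intro x y
    have h := hJordan (x+y)
    have e : (x+y)*(x+y) = x*x + (x*y + y*x) + y*y := by noncomm_ring
    rw [e, hadd (x*x + (x*y + y*x)) (y*y), hadd (x*x) (x*y + y*x), hJordan x, hJordan y,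
      hadd x y] at h
    have h2 : Δ (x*y + y*x) = (Δ x + Δ y) * (x+y) + (x+y) * (Δ x + Δ y)
        - (Δ x * x + x * Δ x) - (Δ y * y + y * Δ y) := by rw [← h]; abel
    rw [h2]; noncomm_ring
  -- triple identity
  have hT : ∀ x y : A, Δ (x*y*x) = Δ x * y * x + x * Δ y * x + x * y * Δ x := by
    intro x y
    have key : (2:ℂ) • (x*y*x) = x*(x*y + y*x) + (x*y + y*x)*x - (x*x*y + y*(x*x)) := by
      rw [two_smul]; noncomm_ring
    have h1 := congrArg Δ key
    rw [hsmul] at h1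
    rw [hsub, hJ' x (x*y + y*x), hJ' (x*x) y, hJ' x y, hJordan x] at h1
    have h4 : (2:ℂ) • Δ (x*y*x) = (2:ℂ) • (Δ x * y * x + x * Δ y * x + x * y * Δ x) := by
      rw [h1, two_smul]; noncomm_ring
    calc Δ (x*y*x) = (2:ℂ)⁻¹ • ((2:ℂ) • Δ (x*y*x)) := by
          rw [smul_smul, show ((2:ℂ)⁻¹*2) = 1 by norm_num, one_smul]
      _ = (2:ℂ)⁻¹ • ((2:ℂ) • (Δ x * y * x + x * Δ y * x + x * y * Δ x)) := by rw [h4]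
      _ = Δ x * y * x + x * Δ y * x + x * y * Δ x := by
          rw [smul_smul, show ((2:ℂ)⁻¹*2) = 1 by norm_num, one_smul]
  -- linearized triple identity
  have hT' : ∀ x y z : A, Δ (x*y*z + z*y*x) = Δ x * y * z + x * Δ y * z + x * y * Δ z
      + Δ z * y * x + z * Δ y * x + z * y * Δ x := by
    intro x y z
    have h := hT (x+z) y
    have e : (x+z)*y*(x+z) = x*y*x + (x*y*z + z*y*x) + z*y*z := by noncomm_ring
    rw [e, hadd (x*y*x + (x*y*z + z*y*x)) (z*y*z), hadd (x*y*x) (x*y*z + z*y*x),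
      hT x y, hT z y, hadd x z] at h
    have h2 : Δ (x*y*z + z*y*x) = (Δ x + Δ z) * y * (x+z) + (x+z) * Δ y * (x+z)
        + (x+z) * y * (Δ x + Δ z)
        - (Δ x * y * x + x * Δ y * x + x * y * Δ x)
        - (Δ z * y * z + z * Δ y * z + z * y * Δ z) := by rw [← h]; abel
    rw [h2]; noncomm_ring
  -- expression for Δ (b*a)
  have hGba : ∀ a b : A, Δ (b*a) = Δ a * b + a * Δ b + Δ b * a + b * Δ a - Δ (a*b) := by
    intro a b
    have h := hJ' a b
    rw [hadd (a*b) (b*a)] at h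
    rw [← h]; abel
  -- Bresar identity
  have hB : ∀ a b x : A,
      (Δ (a*b) - Δ a * b - a * Δ b) * x * (a*b - b*a)
      + (a*b - b*a) * x * (Δ (a*b) - Δ a * b - a * Δ b) = 0 := by
    intro a b x
    have h1 := hT' (a*b) x (b*a)
    rw [hGba a b] at h1
    have e : a*b*x*(b*a) + b*a*x*(a*b) = a*(b*x*b)*a + b*(a*x*a)*b := by noncomm_ring
    rw [e, hadd (a*(b*x*b)*a) (b*(a*x*a)*b), hT a (b*x*b), hT b (a*x*a), hT b x, hT a x] at h1
    have h2 := sub_eq_zero_of_eq h1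
    rw [← h2]
    noncomm_ring
  -- from the Bresar identity, via positivity and faithfulness of the trace:
  have hGxC : ∀ a b x : A,
      (Δ (a*b) - Δ a * b - a * Δ b) * x * (a*b - b*a) = 0 ∧
      (a*b - b*a) * x * (Δ (a*b) - Δ a * b - a * Δ b) = 0 := by
    intro a b
    set G := Δ (a*b) - Δ a * b - a * Δ b with hGdef
    set C := a*b - b*a with hCdef
    have hB' : ∀ x : A, G * x * C + C * x * G = 0 := fun x => hB a b x
    have e1 := hB' (star C)
    have h1 : τ (G * star C * C * star G) + τ (C * star C * G * star G) = 0 := by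
      have h := congrArg (fun t => τ (t * star G)) e1
      simpa [add_mul, map_add] using h
    have q1 : star (C * star G) * (C * star G) = G * star C * C * star G := by
      rw [star_mul, star_star]; noncomm_ring
    have q2 : τ (star (star G * C) * (star G * C)) = τ (C * star C * G * star G) := by
      rw [show star (star G * C) * (star G * C) = (star C * G * star G) * C by
        rw [star_mul, star_star]; noncomm_ring]
      rw [hτtr]
      congr 1; noncomm_ring
    have hsum0 : τ (star (C * star G) * (C * star G))
        + τ (star (star G * C) * (star G * C)) = 0 := by
      rw [q1, q2]; exact h1
    have hz1 : τ (star (C * star G) * (C * star G)) = 0 := by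
      have hp1 := hτpos (C * star G)
      have hp2 := hτpos (star G * C)
      have h3 : τ (star (C * star G) * (C * star G))
          = -τ (star (star G * C) * (star G * C)) := add_eq_zero_iff_eq_neg.mp hsum0
      exact le_antisymm (by rw [h3]; exact neg_nonpos.mpr hp2) hp1
    have hz2 : τ (star (star G * C) * (star G * C)) = 0 := by
      have hp1 := hτpos (C * star G)
      have h3 : τ (star (star G * C) * (star G * C))
          = -τ (star (C * star G) * (C * star G)) := by linear_combination hsum0
      exact le_antisymm (by rw [h3]; exact neg_nonpos.mpr hp1) (hτpos _)
    have hCG : C * star G = 0 := hτfaith _ hz1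
    have hGsC : G * star C = 0 := by
      have h := congrArg star hCG
      rwa [star_mul, star_star, star_zero] at h
    intro x
    have heq : G * x * C = -(C * x * G) := add_eq_zero_iff_eq_neg.mp (hB' x)
    have hone : G * x * C = 0 := by
      apply aux_faithR τ hτfaith
      have harg : (G * x * C) * star (G * x * C) = 0 := by
        calc (G * x * C) * star (G * x * C)
            = (G * x * C) * (star C * (star x * star G)) := by rw [star_mul, star_mul]
          _ = (-(C * x * G)) * (star C * (star x * star G)) := by rw [heq]
          _ = -(C * x * (G * star C) * star x * star G) := by noncomm_ring
          _ = 0 := by rw [hGsC]; simp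
      rw [harg, map_zero]
    have htwo : C * x * G = 0 := by
      have h := hB' x
      rwa [hone, zero_add] at h
    exact ⟨hone, htwo⟩
  -- additivity of the Jordan defect in each variable
  have hgadd2 : ∀ a b d : A, Δ (a*(b+d)) - Δ a * (b+d) - a * Δ (b+d)
      = (Δ (a*b) - Δ a * b - a * Δ b) + (Δ (a*d) - Δ a * d - a * Δ d) := by
    intro a b d
    rw [mul_add, hadd (a*b) (a*d), hadd b d]; noncomm_ring
  have hgadd1 : ∀ a e b : A, Δ ((a+e)*b) - Δ (a+e) * b - (a+e) * Δ b
      = (Δ (a*b) - Δ a * b - a * Δ b) + (Δ (e*b) - Δ e * b - e * Δ b) := by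
    intro a e b
    rw [add_mul, hadd (a*b) (e*b), hadd a e]; noncomm_ring
  have hsum1 : ∀ a b d x : A,
      (Δ (a*b) - Δ a * b - a * Δ b) * x * (a*d - d*a)
      + (Δ (a*d) - Δ a * d - a * Δ d) * x * (a*b - b*a) = 0 := by
    intro a b d x
    have h := (hGxC a (b+d) x).1
    rw [hgadd2 a b d, show a*(b+d) - (b+d)*a = (a*b - b*a) + (a*d - d*a) by noncomm_ring] at h
    have h2 : (Δ (a*b) - Δ a * b - a * Δ b) * x * (a*d - d*a)
        + (Δ (a*d) - Δ a * d - a * Δ d) * x * (a*b - b*a)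
        = ((Δ (a*b) - Δ a * b - a * Δ b) + (Δ (a*d) - Δ a * d - a * Δ d)) * x
            * ((a*b - b*a) + (a*d - d*a))
          - (Δ (a*b) - Δ a * b - a * Δ b) * x * (a*b - b*a)
          - (Δ (a*d) - Δ a * d - a * Δ d) * x * (a*d - d*a) := by noncomm_ring
    rw [h, (hGxC a b x).1, (hGxC a d x).1] at h2
    simpa using h2
  have hcsum1 : ∀ a b d x : A,
      (a*b - b*a) * x * (Δ (a*d) - Δ a * d - a * Δ d)
      + (a*d - d*a) * x * (Δ (a*b) - Δ a * b - a * Δ b) = 0 := by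
    intro a b d x
    have h := (hGxC a (b+d) x).2
    rw [hgadd2 a b d, show a*(b+d) - (b+d)*a = (a*b - b*a) + (a*d - d*a) by noncomm_ring] at h
    have h2 : (a*b - b*a) * x * (Δ (a*d) - Δ a * d - a * Δ d)
        + (a*d - d*a) * x * (Δ (a*b) - Δ a * b - a * Δ b)
        = ((a*b - b*a) + (a*d - d*a)) * x
            * ((Δ (a*b) - Δ a * b - a * Δ b) + (Δ (a*d) - Δ a * d - a * Δ d))
          - (a*b - b*a) * x * (Δ (a*b) - Δ a * b - a * Δ b)
          - (a*d - d*a) * x * (Δ (a*d) - Δ a * d - a * Δ d) := by noncomm_ring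
    rw [h, (hGxC a b x).2, (hGxC a d x).2] at h2
    simpa using h2
  have hGxC2 : ∀ a b d x : A,
      (Δ (a*b) - Δ a * b - a * Δ b) * x * (a*d - d*a) = 0 :=
    fun a b d x => aux_key2 τ hτfaith _ _ _ _ (hsum1 a b d) (fun u => (hGxC a d u).2) x
  have hCxG2 : ∀ a b d x : A,
      (a*d - d*a) * x * (Δ (a*b) - Δ a * b - a * Δ b) = 0 :=
    fun a b d x => aux_key2 τ hτfaith _ _ _ _
      (fun y => by have h := hcsum1 a b d y; rwa [add_comm] at h)
      (fun u => (hGxC a b u).1) x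
  have hsum2 : ∀ a b e d x : A,
      (Δ (a*b) - Δ a * b - a * Δ b) * x * (e*d - d*e)
      + (Δ (e*b) - Δ e * b - e * Δ b) * x * (a*d - d*a) = 0 := by
    intro a b e d x
    have h := hGxC2 (a+e) b d x
    rw [hgadd1 a e b, show (a+e)*d - d*(a+e) = (a*d - d*a) + (e*d - d*e) by noncomm_ring] at h
    have h2 : (Δ (a*b) - Δ a * b - a * Δ b) * x * (e*d - d*e)
        + (Δ (e*b) - Δ e * b - e * Δ b) * x * (a*d - d*a)
        = ((Δ (a*b) - Δ a * b - a * Δ b) + (Δ (e*b) - Δ e * b - e * Δ b)) * x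
            * ((a*d - d*a) + (e*d - d*e))
          - (Δ (a*b) - Δ a * b - a * Δ b) * x * (a*d - d*a)
          - (Δ (e*b) - Δ e * b - e * Δ b) * x * (e*d - d*e) := by noncomm_ring
    rw [h, hGxC2 a b d x, hGxC2 e b d x] at h2
    simpa using h2
  have hFinal : ∀ a b e d x : A,
      (Δ (a*b) - Δ a * b - a * Δ b) * x * (e*d - d*e) = 0 :=
    fun a b e d x => aux_key2 τ hτfaith _ _ _ _ (hsum2 a b e d)
      (fun u => hCxG2 e b d u) x
  -- the product rule
  have hmul : ∀ a b : A, Δ (a * b) = a * Δ b + Δ a * b := by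
    intro a b
    have hGcomm : ∀ u v : A, (Δ (a*b) - Δ a * b - a * Δ b) * (u*v - v*u) = 0 := by
      intro u v
      have h := hFinal a b u v 1
      rwa [mul_one] at h
    -- Δ of a commutator is a limit of commutators, hence killed by G
    obtain ⟨m, hm, -⟩ := hΔ (a*b - b*a) (a*b - b*a)
    have hstar : Tendsto (fun n => star (m n * (a*b - b*a) - (a*b - b*a) * m n)) atTop
        (𝓝 (star (Δ (a*b - b*a)))) := hm.star
    have hmul0 : Tendsto (fun n => (Δ (a*b) - Δ a * b - a * Δ b)
          * star (m n * (a*b - b*a) - (a*b - b*a) * m n)) atTop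
        (𝓝 ((Δ (a*b) - Δ a * b - a * Δ b) * star (Δ (a*b - b*a)))) :=
      tendsto_const_nhds.mul hstar
    have hz : ∀ n, (Δ (a*b) - Δ a * b - a * Δ b)
        * star (m n * (a*b - b*a) - (a*b - b*a) * m n) = 0 := by
      intro n
      rw [show star (m n * (a*b - b*a) - (a*b - b*a) * m n)
        = star (a*b - b*a) * star (m n) - star (m n) * star (a*b - b*a) by
          rw [star_sub, star_mul, star_mul]]
      exact hGcomm (star (a*b - b*a)) (star (m n))
    have hGstarC : (Δ (a*b) - Δ a * b - a * Δ b) * star (Δ (a*b - b*a)) = 0 := by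
      simp only [hz] at hmul0
      exact tendsto_nhds_unique hmul0 tendsto_const_nhds
    have h2G0 : (Δ (a*b) - Δ a * b - a * Δ b) + (Δ (a*b) - Δ a * b - a * Δ b)
        = Δ (a*b - b*a) - (Δ a * b - b * Δ a) - (a * Δ b - Δ b * a) := by
      rw [hsub, hGba a b]; abel
    have hGG2 : (Δ (a*b) - Δ a * b - a * Δ b)
        * star ((Δ (a*b) - Δ a * b - a * Δ b) + (Δ (a*b) - Δ a * b - a * Δ b)) = 0 := by
      rw [h2G0, star_sub, star_sub, mul_sub, mul_sub, hGstarC]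
      rw [show star (Δ a * b - b * Δ a)
            = star b * star (Δ a) - star (Δ a) * star b by rw [star_sub, star_mul, star_mul],
          show star (a * Δ b - Δ b * a)
            = star (Δ b) * star a - star a * star (Δ b) by rw [star_sub, star_mul, star_mul],
          hGcomm (star b) (star (Δ a)), hGcomm (star (Δ b)) (star a)]
      simp
    have hGG : (Δ (a*b) - Δ a * b - a * Δ b) * star (Δ (a*b) - Δ a * b - a * Δ b) = 0 := by
      have h2 : (Δ (a*b) - Δ a * b - a * Δ b) * star (Δ (a*b) - Δ a * b - a * Δ b)
          + (Δ (a*b) - Δ a * b - a * Δ b) * star (Δ (a*b) - Δ a * b - a * Δ b) = 0 := by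
        rw [← mul_add, ← star_add]; exact hGG2
      have h3 : (2:ℂ) • ((Δ (a*b) - Δ a * b - a * Δ b)
          * star (Δ (a*b) - Δ a * b - a * Δ b)) = 0 := by
        rw [two_smul]; exact h2
      calc (Δ (a*b) - Δ a * b - a * Δ b) * star (Δ (a*b) - Δ a * b - a * Δ b)
          = (2:ℂ)⁻¹ • ((2:ℂ) • ((Δ (a*b) - Δ a * b - a * Δ b)
              * star (Δ (a*b) - Δ a * b - a * Δ b))) := by
            rw [smul_smul, show ((2:ℂ)⁻¹*2) = 1 by norm_num, one_smul]
        _ = 0 := by rw [h3, smul_zero]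
    have hG0 : Δ (a*b) - Δ a * b - a * Δ b = 0 :=
      aux_faithR τ hτfaith _ (by rw [hGG, map_zero])
    rw [sub_sub] at hG0
    have h := sub_eq_zero.mp hG0
    rw [h]
    exact add_comm _ _
  exact ⟨hadd, hsmul, hmul⟩
end
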